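/- On a Polish space Ω, for every finite signed Borel measure μ, the total variation norm satisfies |μ|(Ω) = sup { |∫ f dμ| : f ∈ C_b(Ω), ‖f‖_∞ ≤ 1 }, i.e., the bounded continuous functions are norming for the signed measures. -/

import Mathlib

open MeasureTheory Topology Filter
open scoped NNReal ENNReal BoundedContinuousFunction

noncomputable def sInt {Ω : Type*} [MeasurableSpace Ω] (μ : SignedMeasure Ω) (f : Ω → ℝ) : ℝ :=
  (∫ x, f x ∂μ.toJordanDecomposition.posPart) - ∫ x, f x ∂μ.toJordanDecomposition.negPart

def IsTransKernel {Ω : Type*} [MeasurableSpace Ω] (k : Ω → SignedMeasure Ω) : Prop :=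
  ∀ A : Set Ω, MeasurableSet A → Measurable fun x => k x A

def IsBddKernel {Ω : Type*} [MeasurableSpace Ω] (k : Ω → SignedMeasure Ω) : Prop :=
  IsTransKernel k ∧ ∃ C : ℝ≥0, ∀ x, (k x).totalVariation Set.univ ≤ C

def GivenByKernel {Ω : Type*} [MeasurableSpace Ω]
    (T : SignedMeasure Ω →ₗ[ℝ] SignedMeasure Ω) (k : Ω → SignedMeasure Ω) : Prop :=
  ∀ (μ : SignedMeasure Ω) (A : Set Ω), MeasurableSet A → T μ A = sInt μ (fun x => k x A)

def IsBdMeasurable {Ω : Type*} [MeasurableSpace Ω] (f : Ω → ℝ) : Prop :=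
  Measurable f ∧ ∃ C : ℝ, ∀ x, |f x| ≤ C

instance totalVariation_isFiniteMeasure {Ω : Type*} [MeasurableSpace Ω] (μ : SignedMeasure Ω) :
    IsFiniteMeasure μ.totalVariation := by
  unfold SignedMeasure.totalVariation; infer_instance

theorem stmt1 {Ω : Type*} [TopologicalSpace Ω] [PolishSpace Ω] [MeasurableSpace Ω] [BorelSpace Ω]
    (μ : SignedMeasure Ω) :
    (μ.totalVariation Set.univ).toReal =
      sSup { r : ℝ | ∃ f : Ω →ᵇ ℝ, ‖f‖ ≤ 1 ∧ r = |sInt μ f| } := by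
  letI := TopologicalSpace.upgradeIsCompletelyMetrizable Ω
  set p := μ.toJordanDecomposition.posPart with hp
  set n := μ.toJordanDecomposition.negPart with hn
  have hTV : μ.totalVariation Set.univ = p Set.univ + n Set.univ := by
    rw [SignedMeasure.totalVariation, Measure.add_apply]
  have hTVr : (μ.totalVariation Set.univ).toReal
      = (p Set.univ).toReal + (n Set.univ).toReal := by
    rw [hTV, ENNReal.toReal_add (measure_ne_top _ _) (measure_ne_top _ _)]
  -- upper bound for any element of the set
  have hub : ∀ f : Ω →ᵇ ℝ, ‖f‖ ≤ 1 →
      |sInt μ f| ≤ (p Set.univ).toReal + (n Set.univ).toReal := by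
    intro f hf
    have key : ∀ ν : Measure Ω, IsFiniteMeasure ν →
        |∫ x, f x ∂ν| ≤ (ν Set.univ).toReal := by
      intro ν hν
      calc |∫ x, f x ∂ν| = ‖∫ x, f x ∂ν‖ := (Real.norm_eq_abs _).symm
        _ ≤ ∫ x, ‖f x‖ ∂ν := norm_integral_le_integral_norm _
        _ ≤ ∫ _x, (1:ℝ) ∂ν := by
            refine integral_mono (f.integrable ν).norm (integrable_const 1) fun x => ?_
            exact (f.norm_coe_le_norm x).trans hf
        _ = (ν Set.univ).toReal := by simp [Measure.real]
    have h1 := key p inferInstance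
    have h2 := key n inferInstance
    calc |sInt μ f| ≤ |∫ x, f x ∂p| + |∫ x, f x ∂n| := abs_sub _ _
      _ ≤ (p Set.univ).toReal + (n Set.univ).toReal := add_le_add h1 h2
  have hbdd : BddAbove { r : ℝ | ∃ f : Ω →ᵇ ℝ, ‖f‖ ≤ 1 ∧ r = |sInt μ f| } := by
    refine ⟨(p Set.univ).toReal + (n Set.univ).toReal, ?_⟩
    rintro r ⟨f, hf, rfl⟩
    exact hub f hf
  refine le_antisymm ?_ ?_
  · -- lower bound: TV ≤ sSup
    refine le_of_forall_pos_le_add fun ε hε => ?_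
    obtain ⟨s, hs, hps, hns⟩ := μ.toJordanDecomposition.mutuallySingular
    have hδ : (ENNReal.ofReal (ε/4)) ≠ 0 := by
      simp [ENNReal.ofReal_eq_zero]; linarith
    obtain ⟨K1, hK1s, hK1c, hK1⟩ :=
      hs.compl.exists_isClosed_lt_add (μ := p) (measure_ne_top _ _) hδ
    obtain ⟨K2, hK2s, hK2c, hK2⟩ :=
      hs.exists_isClosed_lt_add (μ := n) (measure_ne_top _ _) hδ
    have hps' : p s = 0 := hps
    have hns' : n sᶜ = 0 := hns
    have hpuniv : p Set.univ = p sᶜ := by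
      rw [← measure_add_measure_compl (μ := p) hs, hps', zero_add]
    have hnuniv : n Set.univ = n s := by
      rw [← measure_add_measure_compl (μ := n) hs, hns', add_zero]
    -- numeric bounds
    have hpb : (p Set.univ).toReal ≤ (p K1).toReal + ε/4 := by
      have h1 : p Set.univ ≤ p K1 + ENNReal.ofReal (ε/4) := hpuniv ▸ hK1.le
      calc (p Set.univ).toReal ≤ (p K1 + ENNReal.ofReal (ε/4)).toReal :=
            ENNReal.toReal_mono (by finiteness) h1
        _ = (p K1).toReal + ε/4 := by
            rw [ENNReal.toReal_add (measure_ne_top _ _) ENNReal.ofReal_ne_top,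
              ENNReal.toReal_ofReal (by linarith)]
    have hnb : (n Set.univ).toReal ≤ (n K2).toReal + ε/4 := by
      have h1 : n Set.univ ≤ n K2 + ENNReal.ofReal (ε/4) := hnuniv ▸ hK2.le
      calc (n Set.univ).toReal ≤ (n K2 + ENNReal.ofReal (ε/4)).toReal :=
            ENNReal.toReal_mono (by finiteness) h1
        _ = (n K2).toReal + ε/4 := by
            rw [ENNReal.toReal_add (measure_ne_top _ _) ENNReal.ofReal_ne_top,
              ENNReal.toReal_ofReal (by linarith)]
    -- Urysohn
    have hdisj : Disjoint K2 K1 :=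
      Set.disjoint_left.mpr fun x hx2 hx1 => (hK1s hx1) (hK2s hx2)
    obtain ⟨g, hg0, hg1, hg01⟩ :=
      exists_continuous_zero_one_of_isClosed hK2c hK1c hdisj
    have hFb : ∀ x, ‖2 * g x - 1‖ ≤ 1 := by
      intro x
      rw [Real.norm_eq_abs, abs_le]
      constructor <;> [linarith [(hg01 x).1]; linarith [(hg01 x).2]]
    set F : Ω →ᵇ ℝ := BoundedContinuousFunction.ofNormedAddCommGroup
      (fun x => 2 * g x - 1) (by continuity) 1 hFb with hF
    have hFnorm : ‖F‖ ≤ 1 :=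
      BoundedContinuousFunction.norm_ofNormedAddCommGroup_le _ zero_le_one _
    have hFval : ∀ x, F x = 2 * g x - 1 := fun x => rfl
    -- lower bound on ∫ F dp
    have hintp : 2 * (p K1).toReal - (p Set.univ).toReal ≤ ∫ x, F x ∂p := by
      have hlow : ∀ x, K1.indicator (fun _ => (2:ℝ)) x - 1 ≤ F x := by
        intro x
        rw [hFval]
        by_cases hx : x ∈ K1
        · rw [Set.indicator_of_mem hx]
          have : g x = 1 := hg1 hx
          rw [this]; norm_num
        · rw [Set.indicator_of_notMem hx]
          linarith [(hg01 x).1]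
      have hind : Integrable (K1.indicator fun _ => (2:ℝ)) p :=
        (integrable_const 2).indicator hK1c.measurableSet
      calc 2 * (p K1).toReal - (p Set.univ).toReal
          = ∫ x, (K1.indicator (fun _ => (2:ℝ)) x - 1) ∂p := by
            rw [integral_sub hind (integrable_const 1),
              integral_indicator_const (2:ℝ) hK1c.measurableSet, integral_const]
            simp [mul_comm, Measure.real]
        _ ≤ ∫ x, F x ∂p :=
            integral_mono (hind.sub (integrable_const 1)) (F.integrable p) hlow
    -- upper bound on ∫ F dn
    have hintn : ∫ x, F x ∂n ≤ (n Set.univ).toReal - 2 * (n K2).toReal := by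
      have hhigh : ∀ x, F x ≤ 1 - K2.indicator (fun _ => (2:ℝ)) x := by
        intro x
        rw [hFval]
        by_cases hx : x ∈ K2
        · rw [Set.indicator_of_mem hx]
          have : g x = 0 := hg0 hx
          rw [this]; norm_num
        · rw [Set.indicator_of_notMem hx]
          linarith [(hg01 x).2]
      have hind : Integrable (K2.indicator fun _ => (2:ℝ)) n :=
        (integrable_const 2).indicator hK2c.measurableSet
      calc ∫ x, F x ∂n
          ≤ ∫ x, (1 - K2.indicator (fun _ => (2:ℝ)) x) ∂n :=
            integral_mono (F.integrable n) ((integrable_const 1).sub hind) hhigh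
        _ = (n Set.univ).toReal - 2 * (n K2).toReal := by
            rw [integral_sub (integrable_const 1) hind,
              integral_indicator_const (2:ℝ) hK2c.measurableSet, integral_const]
            simp [mul_comm, Measure.real]
    have hsInt : (p Set.univ).toReal + (n Set.univ).toReal - ε ≤ sInt μ F := by
      have : sInt μ F = (∫ x, F x ∂p) - ∫ x, F x ∂n := rfl
      rw [this]
      linarith
    have hmem : |sInt μ F| ∈ { r : ℝ | ∃ f : Ω →ᵇ ℝ, ‖f‖ ≤ 1 ∧ r = |sInt μ f| } :=
      ⟨F, hFnorm, rfl⟩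
    calc (μ.totalVariation Set.univ).toReal ≤ sInt μ F + ε := by rw [hTVr]; linarith
      _ ≤ |sInt μ F| + ε := by linarith [le_abs_self (sInt μ F)]
      _ ≤ sSup _ + ε := add_le_add_left (le_csSup hbdd hmem) ε
  · refine Real.sSup_le ?_ ENNReal.toReal_nonneg
    rintro r ⟨f, hf, rfl⟩
    rw [hTVr]
    exact hub f hf
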